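/- Let G be a minimal graph of weak degeneracy d, where d ≥ 3; that is, wd(G) = d and wd(H) < d for every proper subgraph H of G. Then the minimum degree of G is at least d. -/
import Mathlib


open scoped Classical

namespace WeakDeg

variable {V : Type*}

/-- `WeakDegenOn G S f` means: starting from the induced subgraph `G[S]` of `G` with value
function `f`, it is possible to remove all vertices by a sequence of legal applications of the
operations `Delete` and `DelSave`. `Delete(u)` removes `u` and decreases by one the value of
every remaining neighbor of `u`; it is legal if the resulting function is nonnegative on the
remaining vertices. `DelSave(u, w)` (for `w` a neighbor of `u` with `f w < f u`) removes `u` and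
decreases by one the value of every remaining neighbor of `u` except `w`; it is legal if
`f w < f u` and the resulting function is nonnegative on the remaining vertices. -/
inductive WeakDegenOn (G : SimpleGraph V) : Finset V → (V → ℤ) → Prop
  | empty (f : V → ℤ) : WeakDegenOn G ∅ f
  | delete (S : Finset V) (f : V → ℤ) (u : V) (hu : u ∈ S)
      (hleg : ∀ v ∈ S.erase u, 0 ≤ if G.Adj u v then f v - 1 else f v)
      (h : WeakDegenOn G (S.erase u) fun v => if G.Adj u v then f v - 1 else f v) :
      WeakDegenOn G S f
  | delSave (S : Finset V) (f : V → ℤ) (u w : V) (hu : u ∈ S) (hw : w ∈ S)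
      (hadj : G.Adj u w) (hlt : f w < f u)
      (hleg : ∀ v ∈ S.erase u, 0 ≤ if G.Adj u v ∧ v ≠ w then f v - 1 else f v)
      (h : WeakDegenOn G (S.erase u) fun v => if G.Adj u v ∧ v ≠ w then f v - 1 else f v) :
      WeakDegenOn G S f

/-- `G` is weakly `f`-degenerate, for `f : V → ℕ`. -/
def WeaklyDegenerateWith (G : SimpleGraph V) [Fintype V] (f : V → ℕ) : Prop :=
  WeakDegenOn G Finset.univ fun v => (f v : ℤ)

/-- `G` is weakly `d`-degenerate. -/
def WeaklyDegenerate (G : SimpleGraph V) [Fintype V] (d : ℕ) : Prop :=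
  WeaklyDegenerateWith G fun _ => d

/-- The weak degeneracy `wd(G)` of `G`: the least `d` such that `G` is weakly `d`-degenerate. -/
noncomputable def weakDegeneracy (G : SimpleGraph V) [Fintype V] : ℕ :=
  sInf {d : ℕ | WeaklyDegenerate G d}

/-- Monotonicity: increasing the value function preserves weak degeneracy. -/
lemma weakDegenOn_mono {G : SimpleGraph V} {S : Finset V} {f : V → ℤ}
    (h : WeakDegenOn G S f) :
    ∀ g : V → ℤ, (∀ x ∈ S, f x ≤ g x) → WeakDegenOn G S g := by
  induction h with
  | empty f => exact fun g _ => .empty g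
  | delete S f u hu hleg h ih =>
    intro g hfg
    refine .delete S g u hu ?_ (ih _ ?_)
    · intro x hx
      have h1 := hleg x hx
      have h2 := hfg x (Finset.mem_of_mem_erase hx)
      by_cases hA : G.Adj u x
      · rw [if_pos hA] at h1 ⊢; omega
      · rw [if_neg hA] at h1 ⊢; omega
    · intro x hx
      have h2 := hfg x (Finset.mem_of_mem_erase hx)
      by_cases hA : G.Adj u x
      · simp only [if_pos hA]; omega
      · simp only [if_neg hA]; omega
  | delSave S f u w hu hw hadj hlt hleg h ih =>
    intro g hfg
    have hfw := hfg w hw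
    have hfu := hfg u hu
    have hwu : w ∈ S.erase u := Finset.mem_erase.2 ⟨hadj.ne', hw⟩
    have hfw0 : 0 ≤ f w := by
      have := hleg w hwu
      simpa using this
    by_cases hlt' : g w < g u
    · refine .delSave S g u w hu hw hadj hlt' ?_ (ih _ ?_)
      · intro x hx
        have h1 := hleg x hx
        have h2 := hfg x (Finset.mem_of_mem_erase hx)
        by_cases hA : G.Adj u x ∧ x ≠ w
        · rw [if_pos hA] at h1 ⊢; omega
        · rw [if_neg hA] at h1 ⊢; omega
      · intro x hx
        have h2 := hfg x (Finset.mem_of_mem_erase hx)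
        by_cases hA : G.Adj u x ∧ x ≠ w
        · simp only [if_pos hA]; omega
        · simp only [if_neg hA]; omega
    · -- use a plain delete for `g`
      refine .delete S g u hu ?_ (ih _ ?_)
      · intro x hx
        have h2 := hfg x (Finset.mem_of_mem_erase hx)
        by_cases hxw : x = w
        · subst hxw; rw [if_pos hadj]; omega
        · have h1 := hleg x hx
          by_cases hA : G.Adj u x
          · rw [if_pos ⟨hA, hxw⟩] at h1; rw [if_pos hA]; omega
          · rw [if_neg (by tauto)] at h1; rw [if_neg hA]; omega
      · intro x hx
        have h2 := hfg x (Finset.mem_of_mem_erase hx)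
        by_cases hxw : x = w
        · subst hxw
          simp only [if_pos hadj, if_neg (by simp : ¬(G.Adj u x ∧ x ≠ x))]
          omega
        · by_cases hA : G.Adj u x
          · simp only [if_pos (⟨hA, hxw⟩ : G.Adj u x ∧ x ≠ w), if_pos hA]; omega
          · simp only [if_neg (by tauto : ¬(G.Adj u x ∧ x ≠ w)), if_neg hA]; omega

/-- Trivial bound: if every value is at least `|S| - 1`, removal succeeds. -/
lemma weakDegenOn_of_card_le {G : SimpleGraph V} :
    ∀ (S : Finset V) (f : V → ℤ), (∀ x ∈ S, (S.card : ℤ) ≤ f x + 1) → WeakDegenOn G S f := by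
  intro S
  induction S using Finset.strongInduction with
  | _ S ih =>
    intro f hf
    rcases S.eq_empty_or_nonempty with rfl | ⟨u, hu⟩
    · exact .empty f
    · have hcard := Finset.card_erase_of_mem hu
      have hpos : 1 ≤ S.card := Finset.card_pos.2 ⟨u, hu⟩
      refine .delete S f u hu ?_ (ih (S.erase u) (Finset.erase_ssubset hu) _ ?_)
      · intro x hx
        have h2 : 2 ≤ S.card := Finset.one_lt_card.2
          ⟨u, hu, x, Finset.mem_of_mem_erase hx, (Finset.ne_of_mem_erase hx).symm⟩
        have h1 := hf x (Finset.mem_of_mem_erase hx)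
        by_cases hA : G.Adj u x
        · rw [if_pos hA]; omega
        · rw [if_neg hA]; omega
      · intro x hx
        have h1 := hf x (Finset.mem_of_mem_erase hx)
        rw [hcard]
        by_cases hA : G.Adj u x
        · simp only [if_pos hA]; omega
        · simp only [if_neg hA]; omega

lemma weaklyDegenerate_card (G : SimpleGraph V) [Fintype V] :
    WeaklyDegenerate G (Fintype.card V) := by
  apply weakDegenOn_of_card_le
  intro x _
  simp only [Finset.card_univ]
  omega

lemma weakDegeneracy_mem (G : SimpleGraph V) [Fintype V] :
    WeaklyDegenerate G (weakDegeneracy G) := by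
  have h : Fintype.card V ∈ {d : ℕ | WeaklyDegenerate G d} := by
    simp only [Set.mem_setOf_eq]
    exact weaklyDegenerate_card G
  exact Nat.sInf_mem ⟨_, h⟩

/-- Adding a vertex whose value dominates its number of neighbors in `S`. -/
lemma weakDegenOn_insert {G : SimpleGraph V} {v : V} {S : Finset V} {f : V → ℤ}
    (h : WeakDegenOn G S f) :
    v ∉ S → ((S.filter (fun x => G.Adj v x)).card : ℤ) ≤ f v →
      WeakDegenOn G (insert v S) f := by
  induction h with
  | empty f =>
    intro _ _
    refine .delete {v} f v (Finset.mem_singleton_self v) ?_ ?_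
    · intro x hx; simp at hx
    · rw [Finset.erase_singleton]; exact .empty _
  | delete S f u hu hleg h ih =>
    intro hv hdeg
    have huv : u ≠ v := fun h' => hv (h' ▸ hu)
    have hins : (insert v S).erase u = insert v (S.erase u) := by
      ext x
      simp only [Finset.mem_erase, Finset.mem_insert]
      constructor
      · rintro ⟨hxu, rfl | hxS⟩
        · exact Or.inl rfl
        · exact Or.inr ⟨hxu, hxS⟩
      · rintro (rfl | ⟨hxu, hxS⟩)
        · exact ⟨huv.symm, Or.inl rfl⟩
        · exact ⟨hxu, Or.inr hxS⟩
    refine .delete (insert v S) f u (Finset.mem_insert_of_mem hu) ?_ ?_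
    · intro x hx
      rw [hins] at hx
      rcases Finset.mem_insert.1 hx with rfl | hx'
    -- x = v
      · by_cases hA : G.Adj u x
        · rw [if_pos hA]
          have hufilt : u ∈ S.filter (fun y => G.Adj x y) :=
            Finset.mem_filter.2 ⟨hu, hA.symm⟩
          have h1 : 1 ≤ (S.filter (fun y => G.Adj x y)).card :=
            Finset.card_pos.2 ⟨u, hufilt⟩
          omega
        · rw [if_neg hA]
          have h0 : (0:ℤ) ≤ ((S.filter (fun y => G.Adj x y)).card : ℤ) := Int.natCast_nonneg _
          omega
      · exact hleg x hx'
    · rw [hins]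
      refine ih (fun hm => hv (Finset.mem_of_mem_erase hm)) ?_
      have hsub : (S.erase u).filter (fun x => G.Adj v x) ⊆ S.filter (fun x => G.Adj v x) :=
        Finset.filter_subset_filter _ (Finset.erase_subset u S)
      by_cases hA : G.Adj u v
      · simp only [if_pos hA]
        have heq : (S.erase u).filter (fun x => G.Adj v x)
            = (S.filter (fun x => G.Adj v x)).erase u := by
          ext x
          simp only [Finset.mem_filter, Finset.mem_erase]
          tauto
        have hufilt : u ∈ S.filter (fun y => G.Adj v y) := Finset.mem_filter.2 ⟨hu, hA.symm⟩
        have := Finset.card_erase_of_mem hufilt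
        rw [heq, this]
        have h1 : 1 ≤ (S.filter (fun y => G.Adj v y)).card := Finset.card_pos.2 ⟨u, hufilt⟩
        omega
      · simp only [if_neg hA]
        have := Finset.card_le_card hsub
        omega
  | delSave S f u w hu hw hadj hlt hleg h ih =>
    intro hv hdeg
    have huv : u ≠ v := fun h' => hv (h' ▸ hu)
    have hvw : v ≠ w := fun h' => hv (h' ▸ hw)
    have hins : (insert v S).erase u = insert v (S.erase u) := by
      ext x
      simp only [Finset.mem_erase, Finset.mem_insert]
      constructor
      · rintro ⟨hxu, rfl | hxS⟩
        · exact Or.inl rfl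
        · exact Or.inr ⟨hxu, hxS⟩
      · rintro (rfl | ⟨hxu, hxS⟩)
        · exact ⟨huv.symm, Or.inl rfl⟩
        · exact ⟨hxu, Or.inr hxS⟩
    refine .delSave (insert v S) f u w (Finset.mem_insert_of_mem hu)
      (Finset.mem_insert_of_mem hw) hadj hlt ?_ ?_
    · intro x hx
      rw [hins] at hx
      rcases Finset.mem_insert.1 hx with rfl | hx'
      · by_cases hA : G.Adj u x
        · rw [if_pos ⟨hA, hvw⟩]
          have hufilt : u ∈ S.filter (fun y => G.Adj x y) :=
            Finset.mem_filter.2 ⟨hu, hA.symm⟩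
          have h1 : 1 ≤ (S.filter (fun y => G.Adj x y)).card :=
            Finset.card_pos.2 ⟨u, hufilt⟩
          omega
        · rw [if_neg (by tauto)]
          have h0 : (0:ℤ) ≤ ((S.filter (fun y => G.Adj x y)).card : ℤ) := Int.natCast_nonneg _
          omega
      · exact hleg x hx'
    · rw [hins]
      refine ih (fun hm => hv (Finset.mem_of_mem_erase hm)) ?_
      have hsub : (S.erase u).filter (fun x => G.Adj v x) ⊆ S.filter (fun x => G.Adj v x) :=
        Finset.filter_subset_filter _ (Finset.erase_subset u S)
      by_cases hA : G.Adj u v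
      · simp only [if_pos (⟨hA, hvw⟩ : G.Adj u v ∧ v ≠ w)]
        have heq : (S.erase u).filter (fun x => G.Adj v x)
            = (S.filter (fun x => G.Adj v x)).erase u := by
          ext x
          simp only [Finset.mem_filter, Finset.mem_erase]
          tauto
        have hufilt : u ∈ S.filter (fun y => G.Adj v y) := Finset.mem_filter.2 ⟨hu, hA.symm⟩
        have := Finset.card_erase_of_mem hufilt
        rw [heq, this]
        have h1 : 1 ≤ (S.filter (fun y => G.Adj v y)).card := Finset.card_pos.2 ⟨u, hufilt⟩
        omega
      · simp only [if_neg (by tauto : ¬(G.Adj u v ∧ v ≠ w))]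
        have := Finset.card_le_card hsub
        omega

/-- Any filter by adjacency to `v` has at most `deg v` elements. -/
lemma filter_adj_card_le {G : SimpleGraph V} [Fintype V] [DecidableRel G.Adj] (v : V)
    {p : DecidablePred fun x => G.Adj v x} (S : Finset V) :
    (@Finset.filter V (fun x => G.Adj v x) p S).card ≤ G.degree v := by
  rw [SimpleGraph.degree]
  apply Finset.card_le_card
  intro x hx
  rw [SimpleGraph.mem_neighborFinset]
  exact (Finset.mem_filter.1 hx).2

/-- Transfer a removal scheme from a graph on a subtype to the ambient graph. -/
lemma weakDegenOn_ofSubtype {G : SimpleGraph V} {s : Set V} {H : SimpleGraph s}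
    (hadj : ∀ a b : s, H.Adj a b ↔ G.Adj a.val b.val)
    {S : Finset s} {f : s → ℤ} (h : WeakDegenOn H S f) :
    ∀ g : V → ℤ, (∀ x ∈ S, g x.val = f x) → WeakDegenOn G (S.image Subtype.val) g := by
  induction h with
  | empty f =>
    intro g _
    simpa using WeakDegenOn.empty (G := G) g
  | delete S f u hu hleg h ih =>
    intro g hg
    refine .delete _ g u.val (Finset.mem_image_of_mem _ hu) ?_ ?_
    · intro x hx
      obtain ⟨hxu, hxI⟩ := Finset.mem_erase.1 hx
      obtain ⟨y, hyS, rfl⟩ := Finset.mem_image.1 hxI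
      have hyu : y ≠ u := fun h' => hxu (congrArg Subtype.val h')
      have h1 := hleg y (by simp only [Finset.mem_erase]; exact ⟨hyu, hyS⟩)
      have hgy := hg y hyS
      by_cases hA : H.Adj u y
      · rw [if_pos ((hadj u y).1 hA)]
        rw [if_pos hA] at h1
        omega
      · rw [if_neg (fun hG : G.Adj u.val y.val => hA ((hadj u y).2 hG))]
        rw [if_neg hA] at h1
        omega
    · have key := ih (fun w => if G.Adj u.val w then g w - 1 else g w) ?_
      · convert key using 2
        ext x
        simp only [Finset.mem_erase, Finset.mem_image]
        constructor
        · rintro ⟨hxu, y, hyS, rfl⟩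
          exact ⟨y, ⟨fun h' => hxu (congrArg Subtype.val h'), hyS⟩, rfl⟩
        · rintro ⟨y, ⟨hyu, hyS⟩, rfl⟩
          exact ⟨fun h' => hyu (Subtype.val_injective h'), y, hyS, rfl⟩
      · intro y hy
        have hyS : y ∈ S := by
          have h' := hy
          simp only [Finset.mem_erase] at h'
          exact h'.2
        have hgy := hg y hyS
        by_cases hA : H.Adj u y
        · simp only [if_pos ((hadj u y).1 hA), if_pos hA, hgy]
        · simp only [if_neg (fun hG : G.Adj u.val y.val => hA ((hadj u y).2 hG)), if_neg hA, hgy]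
  | delSave S f u w hu hw hadjH hlt hleg h ih =>
    intro g hg
    have hne : ∀ y : s, (y.val ≠ w.val) ↔ y ≠ w := by
      intro y
      constructor
      · exact fun hy h' => hy (congrArg Subtype.val h')
      · exact fun hy h' => hy (Subtype.val_injective h')
    refine .delSave _ g u.val w.val (Finset.mem_image_of_mem _ hu)
      (Finset.mem_image_of_mem _ hw) ((hadj u w).1 hadjH) ?_ ?_ ?_
    · rw [hg u hu, hg w hw]; exact hlt
    · intro x hx
      obtain ⟨hxu, hxI⟩ := Finset.mem_erase.1 hx
      obtain ⟨y, hyS, rfl⟩ := Finset.mem_image.1 hxI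
      have hyu : y ≠ u := fun h' => hxu (congrArg Subtype.val h')
      have h1 := hleg y (by simp only [Finset.mem_erase]; exact ⟨hyu, hyS⟩)
      have hgy := hg y hyS
      by_cases hA : H.Adj u y ∧ y ≠ w
      · rw [if_pos ⟨(hadj u y).1 hA.1, (hne y).2 hA.2⟩]
        rw [if_pos hA] at h1
        omega
      · rw [if_neg (fun hG : G.Adj u.val y.val ∧ y.val ≠ w.val => hA ⟨(hadj u y).2 hG.1, (hne y).1 hG.2⟩)]
        rw [if_neg hA] at h1
        omega
    · have key := ih (fun x => if G.Adj u.val x ∧ x ≠ w.val then g x - 1 else g x) ?_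
      · convert key using 2
        ext x
        simp only [Finset.mem_erase, Finset.mem_image]
        constructor
        · rintro ⟨hxu, y, hyS, rfl⟩
          exact ⟨y, ⟨fun h' => hxu (congrArg Subtype.val h'), hyS⟩, rfl⟩
        · rintro ⟨y, ⟨hyu, hyS⟩, rfl⟩
          exact ⟨fun h' => hyu (Subtype.val_injective h'), y, hyS, rfl⟩
      · intro y hy
        have hyS : y ∈ S := by
          have h' := hy
          simp only [Finset.mem_erase] at h'
          exact h'.2
        have hgy := hg y hyS
        by_cases hA : H.Adj u y ∧ y ≠ w
        · simp only [if_pos (⟨(hadj u y).1 hA.1, (hne y).2 hA.2⟩ :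
            G.Adj u.val y.val ∧ y.val ≠ w.val), if_pos hA, hgy]
        · simp only [if_neg (fun hG : G.Adj u.val y.val ∧ y.val ≠ w.val => hA ⟨(hadj u y).2 hG.1, (hne y).1 hG.2⟩), if_neg hA, hgy]

/-- If `G` is a minimal graph of weak degeneracy `d ≥ 3` (every proper subgraph has weak
degeneracy less than `d`), then the minimum degree of `G` is at least `d`. -/
theorem minimal_weakDegeneracy_min_degree {V : Type*} [Fintype V] (G : SimpleGraph V)
    [DecidableRel G.Adj] (d : ℕ) (hd : 3 ≤ d) (hwd : weakDegeneracy G = d)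
    (hmin : ∀ H : G.Subgraph, H ≠ ⊤ → weakDegeneracy H.coe < d) :
    ∀ v, d ≤ G.degree v := by
  intro v
  by_contra hdeg
  push_neg at hdeg
  set H : G.Subgraph := (⊤ : G.Subgraph).deleteVerts {v} with hH
  have hvH : v ∉ H.verts := by rw [hH]; simp
  have hne : H ≠ ⊤ := by
    intro h'
    apply hvH
    rw [h']
    simp
  have hlt := hmin H hne
  have hmem : WeaklyDegenerate H.coe (weakDegeneracy H.coe) := weakDegeneracy_mem _
  have h1 : WeakDegenOn H.coe Finset.univ (fun _ => ((d - 1 : ℕ) : ℤ)) := by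
    refine weakDegenOn_mono hmem _ ?_
    intro x _
    have : weakDegeneracy H.coe ≤ d - 1 := by omega
    exact_mod_cast this
  have hadj : ∀ a b : ↥H.verts, H.coe.Adj a b ↔ G.Adj a.val b.val := by
    rintro ⟨a, ha⟩ ⟨b, hb⟩
    simp only [hH] at ha hb
    simp only [SimpleGraph.Subgraph.coe_adj, hH, SimpleGraph.Subgraph.deleteVerts_adj,
      SimpleGraph.Subgraph.top_adj, SimpleGraph.Subgraph.verts_top]
    constructor
    · tauto
    · intro hG
      refine ⟨trivial, ?_, trivial, ?_, hG⟩ <;> simp_all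
  have h2 := weakDegenOn_ofSubtype hadj h1 (fun _ => ((d - 1 : ℕ) : ℤ)) (fun x _ => rfl)
  have hset : (Finset.univ : Finset ↥H.verts).image Subtype.val = Finset.univ.erase v := by
    ext x
    constructor
    · intro hx
      obtain ⟨⟨y, hy⟩, _, rfl⟩ := Finset.mem_image.1 hx
      rw [hH] at hy
      simp only [SimpleGraph.Subgraph.deleteVerts_verts, SimpleGraph.Subgraph.verts_top,
        Set.mem_diff, Set.mem_singleton_iff] at hy
      simp only [Finset.mem_erase, Finset.mem_univ, and_true]
      exact hy.2
    · intro hx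
      have hx' : x ≠ v := (Finset.mem_erase.1 hx).1
      refine Finset.mem_image.2 ⟨⟨x, ?_⟩, Finset.mem_univ _, rfl⟩
      rw [hH]
      simp [hx']
  rw [hset] at h2
  have h3 := weakDegenOn_insert h2 (Finset.notMem_erase v _) (by
    have hdv : G.degree v ≤ d - 1 := by omega
    exact_mod_cast le_trans (filter_adj_card_le v (Finset.univ.erase v)) hdv)
  rw [Finset.insert_erase (Finset.mem_univ v)] at h3
  have h4 : WeaklyDegenerate G (d - 1) := h3
  have h4' : d - 1 ∈ {k : ℕ | WeaklyDegenerate G k} := by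
    simp only [Set.mem_setOf_eq]
    exact h4
  have h5 : weakDegeneracy G ≤ d - 1 := Nat.sInf_le h4'
  omega

end WeakDeg
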